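/- Finite mixtures of distinct univariate Gaussian densities are identifiable: if Σ_{k=1}^K π_k φ(x; μ_k, σ_k²) = Σ_{j=1}^K π'_j φ(x; μ'_j, σ'_j²) for all x ∈ ℝ, where the pairs (μ_k, σ_k²) are pairwise distinct, the pairs (μ'_j, σ'_j²) are pairwise distinct, and all weights are positive and sum to 1, then the multisets {(π_k, μ_k, σ_k²)} and {(π'_j, μ'_j, σ'_j²)} coincide. -/

import Mathlib

/-- The univariate Gaussian density with mean `μ` and variance `v`. -/
noncomputable def gaussPDF (μ v x : ℝ) : ℝ :=
  (Real.sqrt (2 * Real.pi * v))⁻¹ * Real.exp (-(x - μ) ^ 2 / (2 * v))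

open Filter Real


lemma quad_bot (A B : ℝ) (hA : A < 0) : Tendsto (fun x : ℝ => A*x^2 + B*x) atTop atBot := by
  have h1 : Tendsto (fun x : ℝ => A*x + B) atTop atBot :=
    tendsto_atBot_add_const_right _ B (tendsto_id.const_mul_atTop_of_neg hA)
  have h2 := (tendsto_id (α := ℝ)).atTop_mul_atBot₀ h1
  refine h2.congr (fun x => ?_)
  simp only [id]; ring

lemma exp_quad_zero (A B : ℝ) (h : A < 0 ∨ (A = 0 ∧ B < 0)) :
    Tendsto (fun x : ℝ => Real.exp (A*x^2 + B*x)) atTop (nhds 0) := by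
  refine Real.tendsto_exp_atBot.comp ?_
  rcases h with hA | ⟨hA, hB⟩
  · exact quad_bot A B hA
  · subst hA
    refine (tendsto_id.const_mul_atTop_of_neg hB).congr (fun x => by simp)

lemma vanish (c : ℝ × ℝ → ℝ) : ∀ S : Finset (ℝ × ℝ),
    (∀ x : ℝ, ∑ q ∈ S, c q * Real.exp (q.1 * x ^ 2 + q.2 * x) = 0) → ∀ q ∈ S, c q = 0 := by
  intro S
  induction S using Finset.strongInduction with
  | _ S ih =>
    intro h
    rcases S.eq_empty_or_nonempty with rfl | hS
    · simp
    obtain ⟨m, hmS, hmax⟩ := S.exists_max_image (fun q => toLex q) hS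
    have hg : ∀ x : ℝ, ∑ q ∈ S, c q * Real.exp ((q.1 - m.1) * x ^ 2 + (q.2 - m.2) * x) = 0 := by
      intro x
      calc ∑ q ∈ S, c q * Real.exp ((q.1 - m.1) * x ^ 2 + (q.2 - m.2) * x)
          = (∑ q ∈ S, c q * Real.exp (q.1 * x ^ 2 + q.2 * x)) *
              Real.exp (-(m.1 * x ^ 2 + m.2 * x)) := by
            rw [Finset.sum_mul]
            refine Finset.sum_congr rfl fun q _ => ?_
            rw [mul_assoc, ← Real.exp_add]
            congr 1
            ring
        _ = 0 := by rw [h x, zero_mul]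
    have hterm : ∀ q ∈ S, Tendsto (fun x : ℝ => c q * Real.exp ((q.1 - m.1) * x ^ 2 + (q.2 - m.2) * x))
        atTop (nhds (if q = m then c m else 0)) := by
      intro q hq
      by_cases hqm : q = m
      · subst hqm
        simp only [sub_self, zero_mul, add_zero, Real.exp_zero, mul_one, if_pos rfl]
        exact tendsto_const_nhds
      · rw [if_neg hqm]
        have hlt : toLex q < toLex m :=
          lt_of_le_of_ne (hmax q hq) (fun he => hqm (toLex.injective he))
        rw [Prod.Lex.lt_iff, ofLex_toLex, ofLex_toLex] at hlt
        have : Tendsto (fun x : ℝ => Real.exp ((q.1 - m.1) * x ^ 2 + (q.2 - m.2) * x)) atTop (nhds 0) := by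
          apply exp_quad_zero
          rcases hlt with h1 | ⟨h1, h2⟩
          · exact Or.inl (by linarith)
          · exact Or.inr ⟨by linarith, by linarith⟩
        simpa using this.const_mul (c q)
    have hlim : Tendsto (fun x : ℝ => ∑ q ∈ S, c q * Real.exp ((q.1 - m.1) * x ^ 2 + (q.2 - m.2) * x))
        atTop (nhds (∑ q ∈ S, if q = m then c m else 0)) :=
      tendsto_finset_sum _ hterm
    have hsum : (∑ q ∈ S, if q = m then c m else 0) = c m := by
      simp [Finset.sum_ite_eq', hmS]
    rw [hsum] at hlim
    have hzero : Tendsto (fun x : ℝ => ∑ q ∈ S, c q * Real.exp ((q.1 - m.1) * x ^ 2 + (q.2 - m.2) * x))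
        atTop (nhds 0) := by
      have : (fun x : ℝ => ∑ q ∈ S, c q * Real.exp ((q.1 - m.1) * x ^ 2 + (q.2 - m.2) * x)) = fun _ => 0 :=
        funext hg
      rw [this]; exact tendsto_const_nhds
    have hm0 : c m = 0 := tendsto_nhds_unique hlim hzero
    have h' : ∀ x : ℝ, ∑ q ∈ S.erase m, c q * Real.exp (q.1 * x ^ 2 + q.2 * x) = 0 := by
      intro x
      have := Finset.add_sum_erase S (fun q => c q * Real.exp (q.1 * x ^ 2 + q.2 * x)) hmS
      rw [h x] at this
      simpa [hm0] using this
    intro q hq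
    by_cases hqm : q = m
    · exact hqm ▸ hm0
    · exact ih (S.erase m) (Finset.erase_ssubset hmS) h' q (Finset.mem_erase.mpr ⟨hqm, hq⟩)

lemma gauss_eq (μ v x : ℝ) (hv : 0 < v) :
    gaussPDF μ v x = (Real.sqrt (2*Real.pi*v))⁻¹ * Real.exp (-(μ^2)/(2*v)) *
      Real.exp ((-(1/(2*v))) * x^2 + (μ/v) * x) := by
  unfold gaussPDF
  rw [mul_assoc _ (Real.exp _) (Real.exp _), ← Real.exp_add]
  congr 1
  field_simp
  ring

lemma ab_inj {μ1 v1 μ2 v2 : ℝ} (h1 : 0 < v1) (h2 : 0 < v2)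
    (h : ((-(1/(2*v1)) : ℝ), (μ1/v1 : ℝ)) = (-(1/(2*v2)), μ2/v2)) : μ1 = μ2 ∧ v1 = v2 := by
  rw [Prod.mk.injEq] at h
  obtain ⟨ha, hb⟩ := h
  have hv : v1 = v2 := by
    field_simp at ha
    linarith
  subst hv
  refine ⟨?_, rfl⟩
  field_simp at hb
  exact hb

/-- Identifiability of finite mixtures of distinct univariate Gaussians: equal mixtures
imply the multisets of (weight, mean, variance) triples coincide. -/
theorem stmt_13 {K : ℕ} (w w' μ μ' v v' : Fin K → ℝ)
    (hv : ∀ k, 0 < v k) (hv' : ∀ j, 0 < v' j)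
    (hw : ∀ k, 0 < w k) (hw' : ∀ j, 0 < w' j)
    (hwsum : ∑ k, w k = 1) (hwsum' : ∑ j, w' j = 1)
    (hdist : Function.Injective fun k => (μ k, v k))
    (hdist' : Function.Injective fun j => (μ' j, v' j))
    (heq : ∀ x : ℝ, ∑ k, w k * gaussPDF (μ k) (v k) x = ∑ j, w' j * gaussPDF (μ' j) (v' j) x) :
    (Finset.univ.val.map fun k => (w k, μ k, v k)) =
      (Finset.univ.val.map fun j => (w' j, μ' j, v' j)) := by
  classical
  set p : Fin K → ℝ × ℝ := fun k => (-(1/(2*v k)), μ k / v k) with hp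
  set p' : Fin K → ℝ × ℝ := fun j => (-(1/(2*v' j)), μ' j / v' j) with hp'
  set D : ℝ → ℝ → ℝ := fun m s => (Real.sqrt (2*Real.pi*s))⁻¹ * Real.exp (-(m^2)/(2*s)) with hD
  set C : Fin K → ℝ := fun k => w k * D (μ k) (v k) with hC
  set C' : Fin K → ℝ := fun j => w' j * D (μ' j) (v' j) with hC'
  have hDpos : ∀ m s : ℝ, 0 < s → 0 < D m s := fun m s hs => by
    have h2 : 0 < 2 * Real.pi * s := by positivity
    exact mul_pos (inv_pos.mpr (Real.sqrt_pos.mpr h2)) (Real.exp_pos _)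
  have hCpos : ∀ k, 0 < C k := fun k => mul_pos (hw k) (hDpos _ _ (hv k))
  have hC'pos : ∀ j, 0 < C' j := fun j => mul_pos (hw' j) (hDpos _ _ (hv' j))
  -- injectivity of p and p'
  have hpmv : ∀ k l, p k = p l → μ k = μ l ∧ v k = v l := fun k l h =>
    ab_inj (hv k) (hv l) h
  have hp'mv : ∀ j i, p' j = p' i → μ' j = μ' i ∧ v' j = v' i := fun j i h =>
    ab_inj (hv' j) (hv' i) h
  have hpp' : ∀ k j, p' j = p k → μ' j = μ k ∧ v' j = v k := fun k j h =>
    ab_inj (hv' j) (hv k) h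
  have hpinj : Function.Injective p := fun k l h =>
    hdist (by obtain ⟨h1, h2⟩ := hpmv k l h; simp [h1, h2])
  have hp'inj : Function.Injective p' := fun j i h =>
    hdist' (by obtain ⟨h1, h2⟩ := hp'mv j i h; simp [h1, h2])
  -- the combined index set and coefficient function
  set S : Finset (ℝ × ℝ) := Finset.image p Finset.univ ∪ Finset.image p' Finset.univ with hS
  set c : ℝ × ℝ → ℝ := fun q =>
    (∑ k ∈ Finset.univ.filter (fun k => p k = q), C k) -
    (∑ j ∈ Finset.univ.filter (fun j => p' j = q), C' j) with hc
  have hmixterm : ∀ (x : ℝ) (k : Fin K),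
      w k * gaussPDF (μ k) (v k) x = C k * Real.exp ((p k).1 * x ^ 2 + (p k).2 * x) := by
    intro x k
    rw [gauss_eq _ _ _ (hv k)]
    simp only [hC, hD, hp]
    ring
  have hmixterm' : ∀ (x : ℝ) (j : Fin K),
      w' j * gaussPDF (μ' j) (v' j) x = C' j * Real.exp ((p' j).1 * x ^ 2 + (p' j).2 * x) := by
    intro x j
    rw [gauss_eq _ _ _ (hv' j)]
    simp only [hC', hD, hp']
    ring
  have hfib : ∀ x : ℝ,
      ∑ q ∈ S, (∑ k ∈ Finset.univ.filter (fun k => p k = q), C k) * Real.exp (q.1 * x ^ 2 + q.2 * x)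
        = ∑ k, C k * Real.exp ((p k).1 * x ^ 2 + (p k).2 * x) := by
    intro x
    rw [← Finset.sum_fiberwise_of_maps_to
      (fun k _ => Finset.mem_union_left _ (Finset.mem_image_of_mem p (Finset.mem_univ k)))
      (fun k => C k * Real.exp ((p k).1 * x ^ 2 + (p k).2 * x))]
    refine Finset.sum_congr rfl fun q _ => ?_
    rw [Finset.sum_mul]
    refine Finset.sum_congr rfl fun k hk => ?_
    rw [(Finset.mem_filter.mp hk).2]
  have hfib' : ∀ x : ℝ,
      ∑ q ∈ S, (∑ j ∈ Finset.univ.filter (fun j => p' j = q), C' j) * Real.exp (q.1 * x ^ 2 + q.2 * x)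
        = ∑ j, C' j * Real.exp ((p' j).1 * x ^ 2 + (p' j).2 * x) := by
    intro x
    rw [← Finset.sum_fiberwise_of_maps_to
      (fun j _ => Finset.mem_union_right _ (Finset.mem_image_of_mem p' (Finset.mem_univ j)))
      (fun j => C' j * Real.exp ((p' j).1 * x ^ 2 + (p' j).2 * x))]
    refine Finset.sum_congr rfl fun q _ => ?_
    rw [Finset.sum_mul]
    refine Finset.sum_congr rfl fun j hj => ?_
    rw [(Finset.mem_filter.mp hj).2]
  have hsum0 : ∀ x : ℝ, ∑ q ∈ S, c q * Real.exp (q.1 * x ^ 2 + q.2 * x) = 0 := by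
    intro x
    have hx := heq x
    simp only [hc, sub_mul]
    rw [Finset.sum_sub_distrib, hfib x, hfib' x]
    rw [Finset.sum_congr rfl (fun k _ => (hmixterm x k).symm),
        Finset.sum_congr rfl (fun j _ => (hmixterm' x j).symm), hx, sub_self]
  have hvan := vanish c S hsum0
  -- for each k, there is j with matching parameters and weight
  have key : ∀ k, ∃ j, μ' j = μ k ∧ v' j = v k ∧ w' j = w k := by
    intro k
    have hk : c (p k) = 0 := hvan (p k) (Finset.mem_union_left _ (Finset.mem_image_of_mem p (Finset.mem_univ k)))
    have hfilk : Finset.univ.filter (fun l => p l = p k) = {k} := by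
      ext l
      simp only [Finset.mem_filter, Finset.mem_univ, true_and, Finset.mem_singleton]
      exact ⟨fun h => hpinj h, fun h => h ▸ rfl⟩
    rw [hc] at hk
    simp only [hfilk, Finset.sum_singleton, sub_eq_zero] at hk
    -- hk : C k = ∑ j ∈ filter ..., C' j
    set T := Finset.univ.filter (fun j => p' j = p k) with hT
    have hTne : T.Nonempty := by
      by_contra hne
      rw [Finset.not_nonempty_iff_eq_empty] at hne
      rw [hne, Finset.sum_empty] at hk
      exact absurd hk (ne_of_gt (hCpos k))
    obtain ⟨j, hjT⟩ := hTne
    have hjp : p' j = p k := (Finset.mem_filter.mp hjT).2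
    have hTj : T = {j} := by
      ext i
      simp only [hT, Finset.mem_filter, Finset.mem_univ, true_and, Finset.mem_singleton]
      exact ⟨fun h => hp'inj (h.trans hjp.symm), fun h => h ▸ hjp⟩
    rw [hTj, Finset.sum_singleton] at hk
    obtain ⟨hμeq, hveq⟩ := hpp' k j hjp
    refine ⟨j, hμeq, hveq, ?_⟩
    have : w k * D (μ k) (v k) = w' j * D (μ k) (v k) := by
      have h1 : C k = w k * D (μ k) (v k) := rfl
      have h2 : C' j = w' j * D (μ k) (v k) := by
        show w' j * D (μ' j) (v' j) = w' j * D (μ k) (v k)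
        rw [hμeq, hveq]
      rw [← h1, ← h2]; exact hk
    exact mul_right_cancel₀ (ne_of_gt (hDpos _ _ (hv k))) this.symm
  choose σ hσμ hσv hσw using key
  have hσinj : Function.Injective σ := by
    intro k l h
    apply hdist
    have h1 : μ k = μ l := by rw [← hσμ k, ← hσμ l, h]
    have h2 : v k = v l := by rw [← hσv k, ← hσv l, h]
    simp [h1, h2]
  have hσbij : Function.Bijective σ := (Finite.injective_iff_bijective).mp hσinj
  set e : Fin K ≃ Fin K := Equiv.ofBijective σ hσbij with he
  have huniv : Finset.univ.val.map σ = Finset.univ.val := by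
    have := Finset.map_univ_equiv e
    calc Finset.univ.val.map σ = (Finset.map e.toEmbedding Finset.univ).val := rfl
      _ = Finset.univ.val := by rw [this]
  calc (Finset.univ.val.map fun k => (w k, μ k, v k))
      = Finset.univ.val.map ((fun j => (w' j, μ' j, v' j)) ∘ σ) := by
        refine Multiset.map_congr rfl fun k _ => ?_
        simp [Function.comp, hσμ k, hσv k, hσw k]
    _ = (Finset.univ.val.map σ).map (fun j => (w' j, μ' j, v' j)) := by
        rw [Multiset.map_map]
    _ = Finset.univ.val.map (fun j => (w' j, μ' j, v' j)) := by rw [huniv]
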